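/- Let a, ζ ∈ ℝ, b ≠ 0, θ₀, θ₁ ∈ ℝ, let K be a finite set, A : K → ℝ, and let ω_k ≠ 0 for each k ∈ K; set φ := 2θ₀. Then the function θ(τ) := θ₀ + (a/b²) τ + (e^τ − 1) [ θ₁ − a/b² − (ζ/b²) cos φ Σ_{k∈K} A_k ω_k/(1 + ω_k²) ] − (ζ/b²) Σ_{k∈K} (A_k/(1 + ω_k²)) [ (cos(ω_k τ + φ) − cos φ)/ω_k − sin(ω_k τ + φ) + e^τ sin φ ] is the unique twice differentiable solution of θ''(τ) = θ'(τ) − a/b² − (ζ/b²) Σ_{k∈K} A_k sin(ω_k τ + φ) with θ(0) = θ₀ and θ'(0) = θ₁. -/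

import Mathlib

private lemma aux_hasDerivAt_term (ω φ : ℝ) (hω : ω ≠ 0) (τ : ℝ) :
    HasDerivAt (fun t => (Real.cos (ω * t + φ) - Real.cos φ) / ω - Real.sin (ω * t + φ)
        + Real.exp t * Real.sin φ)
      (-Real.sin (ω * τ + φ) - ω * Real.cos (ω * τ + φ) + Real.exp τ * Real.sin φ) τ := by
  have hlin : HasDerivAt (fun t : ℝ => ω * t + φ) ω τ := by
    simpa using ((hasDerivAt_id τ).const_mul ω).add_const φ
  have hcos : HasDerivAt (fun t => Real.cos (ω * t + φ)) (-Real.sin (ω * τ + φ) * ω) τ :=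
    by have := (Real.hasDerivAt_cos (ω * τ + φ)).comp τ hlin; exact this
  have hsin : HasDerivAt (fun t => Real.sin (ω * t + φ)) (Real.cos (ω * τ + φ) * ω) τ :=
    by have := (Real.hasDerivAt_sin (ω * τ + φ)).comp τ hlin; exact this
  have h := (((hcos.sub_const (Real.cos φ)).div_const ω).fun_sub hsin).fun_add
    ((Real.hasDerivAt_exp τ).mul_const (Real.sin φ))
  refine h.congr_deriv ?_
  field_simp

private lemma aux_hasDerivAt_term' (ω φ : ℝ) (τ : ℝ) :
    HasDerivAt (fun t => -Real.sin (ω * t + φ) - ω * Real.cos (ω * t + φ)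
        + Real.exp t * Real.sin φ)
      (-ω * Real.cos (ω * τ + φ) + ω ^ 2 * Real.sin (ω * τ + φ) + Real.exp τ * Real.sin φ) τ := by
  have hlin : HasDerivAt (fun t : ℝ => ω * t + φ) ω τ := by
    simpa using ((hasDerivAt_id τ).const_mul ω).add_const φ
  have hcos : HasDerivAt (fun t => Real.cos (ω * t + φ)) (-Real.sin (ω * τ + φ) * ω) τ :=
    by have := (Real.hasDerivAt_cos (ω * τ + φ)).comp τ hlin; exact this
  have hsin : HasDerivAt (fun t => Real.sin (ω * t + φ)) (Real.cos (ω * τ + φ) * ω) τ :=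
    by have := (Real.hasDerivAt_sin (ω * τ + φ)).comp τ hlin; exact this
  have h := (hsin.fun_neg.fun_sub (hcos.const_mul ω)).fun_add ((Real.hasDerivAt_exp τ).mul_const (Real.sin φ))
  refine h.congr_deriv ?_
  ring

/-- If `u' = v`, `v' = v`, `u 0 = 0`, `v 0 = 0`, then `u = 0`. -/
private lemma aux_ode_zero (u v : ℝ → ℝ) (h1 : ∀ τ, HasDerivAt u (v τ) τ)
    (h2 : ∀ τ, HasDerivAt v (v τ) τ) (h0 : u 0 = 0) (h0' : v 0 = 0) : ∀ τ, u τ = 0 := by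
  have hv : ∀ τ, v τ = 0 := by
    have hw : ∀ τ, HasDerivAt (fun t => v t * Real.exp (-t)) 0 τ := by
      intro τ
      have hexp : HasDerivAt (fun t : ℝ => Real.exp (-t)) (-Real.exp (-τ)) τ := by
        simpa [Function.comp_def] using (Real.hasDerivAt_exp (-τ)).comp τ (hasDerivAt_id τ).neg
      have := (h2 τ).fun_mul hexp
      refine this.congr_deriv ?_
      ring
    have hconst : ∀ x y : ℝ, v x * Real.exp (-x) = v y * Real.exp (-y) :=
      is_const_of_deriv_eq_zero (fun τ => (hw τ).differentiableAt)
        (fun τ => (hw τ).deriv)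
    intro τ
    have := hconst τ 0
    rw [h0', zero_mul] at this
    exact (mul_eq_zero.mp this).resolve_right (Real.exp_ne_zero _)
  have hconst : ∀ x y : ℝ, u x = u y :=
    is_const_of_deriv_eq_zero (fun τ => (h1 τ).differentiableAt)
      (fun τ => by rw [(h1 τ).deriv, hv τ])
  intro τ
  rw [hconst τ 0, h0]

/-- Equation (4.6): the explicit approximate pre-capture solution is the unique twice
differentiable solution of `θ'' = θ' - a/b² - (ζ/b²) ∑_k A_k sin(ω_k τ + φ)` with
`θ(0) = θ₀` and `θ'(0) = θ₁`, where `φ = 2θ₀`. -/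
theorem precapture_ode_unique_solution
    (a ζ b θ₀ θ₁ : ℝ) (hb : b ≠ 0)
    (K : Finset ℤ) (A ω : ℤ → ℝ) (hω : ∀ k ∈ K, ω k ≠ 0)
    (φ : ℝ) (hφ : φ = 2 * θ₀) (θ : ℝ → ℝ) :
    ((∀ τ, DifferentiableAt ℝ θ τ) ∧ (∀ τ, DifferentiableAt ℝ (deriv θ) τ) ∧
      (∀ τ, deriv (deriv θ) τ = deriv θ τ - a / b ^ 2 -
        (ζ / b ^ 2) * ∑ k ∈ K, A k * Real.sin (ω k * τ + φ)) ∧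
      θ 0 = θ₀ ∧ deriv θ 0 = θ₁)
    ↔ (∀ τ, θ τ = θ₀ + (a / b ^ 2) * τ +
        (Real.exp τ - 1) * (θ₁ - a / b ^ 2 -
          (ζ / b ^ 2) * Real.cos φ * ∑ k ∈ K, A k * ω k / (1 + (ω k) ^ 2)) -
        (ζ / b ^ 2) * ∑ k ∈ K, (A k / (1 + (ω k) ^ 2)) *
          ((Real.cos (ω k * τ + φ) - Real.cos φ) / ω k - Real.sin (ω k * τ + φ)
            + Real.exp τ * Real.sin φ)) := by
  set c : ℝ := a / b ^ 2 with hc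
  set z : ℝ := ζ / b ^ 2 with hz
  set C : ℝ := θ₁ - c - z * Real.cos φ * ∑ k ∈ K, A k * ω k / (1 + (ω k) ^ 2) with hC
  set F : ℝ → ℝ := fun τ => θ₀ + c * τ + (Real.exp τ - 1) * C -
      z * ∑ k ∈ K, (A k / (1 + (ω k) ^ 2)) *
        ((Real.cos (ω k * τ + φ) - Real.cos φ) / ω k - Real.sin (ω k * τ + φ)
          + Real.exp τ * Real.sin φ) with hFdef
  set F' : ℝ → ℝ := fun τ => c + Real.exp τ * C -
      z * ∑ k ∈ K, (A k / (1 + (ω k) ^ 2)) *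
        (-Real.sin (ω k * τ + φ) - ω k * Real.cos (ω k * τ + φ)
          + Real.exp τ * Real.sin φ) with hF'def
  set F'' : ℝ → ℝ := fun τ => Real.exp τ * C -
      z * ∑ k ∈ K, (A k / (1 + (ω k) ^ 2)) *
        (-(ω k) * Real.cos (ω k * τ + φ) + (ω k) ^ 2 * Real.sin (ω k * τ + φ)
          + Real.exp τ * Real.sin φ) with hF''def
  have hden : ∀ k : ℤ, (1 : ℝ) + (ω k) ^ 2 ≠ 0 := fun k => by positivity
  -- F has derivative F'
  have hFd : ∀ τ, HasDerivAt F (F' τ) τ := by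
    intro τ
    have hS : HasDerivAt (fun t => ∑ k ∈ K, (A k / (1 + (ω k) ^ 2)) *
        ((Real.cos (ω k * t + φ) - Real.cos φ) / ω k - Real.sin (ω k * t + φ)
          + Real.exp t * Real.sin φ))
        (∑ k ∈ K, (A k / (1 + (ω k) ^ 2)) *
          (-Real.sin (ω k * τ + φ) - ω k * Real.cos (ω k * τ + φ)
            + Real.exp τ * Real.sin φ)) τ :=
      HasDerivAt.fun_sum fun k hk =>
        (aux_hasDerivAt_term (ω k) φ (hω k hk) τ).const_mul _
    have h := ((((hasDerivAt_id τ).const_mul c).const_add θ₀).fun_add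
      (((Real.hasDerivAt_exp τ).sub_const 1).mul_const C)).fun_sub (hS.const_mul z)
    refine h.congr_deriv ?_
    ring
  -- F' has derivative F''
  have hF'd : ∀ τ, HasDerivAt F' (F'' τ) τ := by
    intro τ
    have hS : HasDerivAt (fun t => ∑ k ∈ K, (A k / (1 + (ω k) ^ 2)) *
        (-Real.sin (ω k * t + φ) - ω k * Real.cos (ω k * t + φ)
          + Real.exp t * Real.sin φ))
        (∑ k ∈ K, (A k / (1 + (ω k) ^ 2)) *
          (-(ω k) * Real.cos (ω k * τ + φ) + (ω k) ^ 2 * Real.sin (ω k * τ + φ)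
            + Real.exp τ * Real.sin φ)) τ :=
      HasDerivAt.fun_sum fun k hk => (aux_hasDerivAt_term' (ω k) φ τ).const_mul _
    have h := (((Real.hasDerivAt_exp τ).mul_const C).const_add c).fun_sub (hS.const_mul z)
    convert h using 1
  have hderivF : deriv F = F' := funext fun τ => (hFd τ).deriv
  have hderivF' : deriv F' = F'' := funext fun τ => (hF'd τ).deriv
  -- F satisfies the ODE
  have hFode : ∀ τ, F'' τ = F' τ - c - z * ∑ k ∈ K, A k * Real.sin (ω k * τ + φ) := by
    intro τ
    have key : ∑ k ∈ K, (A k / (1 + (ω k) ^ 2)) *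
        (-(ω k) * Real.cos (ω k * τ + φ) + (ω k) ^ 2 * Real.sin (ω k * τ + φ)
          + Real.exp τ * Real.sin φ)
        - ∑ k ∈ K, (A k / (1 + (ω k) ^ 2)) *
          (-Real.sin (ω k * τ + φ) - ω k * Real.cos (ω k * τ + φ)
            + Real.exp τ * Real.sin φ)
        = ∑ k ∈ K, A k * Real.sin (ω k * τ + φ) := by
      rw [← Finset.sum_sub_distrib]
      refine Finset.sum_congr rfl fun k hk => ?_
      have h1 := hden k
      field_simp
      ring
    show Real.exp τ * C - z * _ = (c + Real.exp τ * C - z * _) - c - z * _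
    linear_combination (-z) * key
  -- initial conditions for F
  have hF0 : F 0 = θ₀ := by
    show θ₀ + c * 0 + (Real.exp 0 - 1) * C - z * _ = θ₀
    have : ∑ k ∈ K, (A k / (1 + (ω k) ^ 2)) *
        ((Real.cos (ω k * 0 + φ) - Real.cos φ) / ω k - Real.sin (ω k * 0 + φ)
          + Real.exp 0 * Real.sin φ) = 0 := by
      refine Finset.sum_eq_zero fun k hk => ?_
      simp
    rw [this]
    simp
  have hF'0 : F' 0 = θ₁ := by
    show c + Real.exp 0 * C - z * _ = θ₁
    have hkey : ∑ k ∈ K, (A k / (1 + (ω k) ^ 2)) *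
        (-Real.sin (ω k * 0 + φ) - ω k * Real.cos (ω k * 0 + φ)
          + Real.exp 0 * Real.sin φ)
        = -Real.cos φ * ∑ k ∈ K, A k * ω k / (1 + (ω k) ^ 2) := by
      rw [Finset.mul_sum]
      refine Finset.sum_congr rfl fun k hk => ?_
      have h1 := hden k
      simp only [mul_zero, zero_add, Real.exp_zero, one_mul]
      field_simp
      ring
    rw [hkey, hC]
    simp only [Real.exp_zero, one_mul]
    ring
  constructor
  · rintro ⟨hθd, hθd', hθode, hθ0, hθ'0⟩
    -- uniqueness: g = θ - F is zero
    have hg1 : ∀ τ, HasDerivAt (fun t => θ t - F t) (deriv θ τ - F' τ) τ := fun τ =>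
      (hθd τ).hasDerivAt.sub (hFd τ)
    have hg2 : ∀ τ, HasDerivAt (fun t => deriv θ t - F' t) (deriv θ τ - F' τ) τ := by
      intro τ
      have h := (hθd' τ).hasDerivAt.sub (hF'd τ)
      have heq : deriv (deriv θ) τ - F'' τ = deriv θ τ - F' τ := by
        rw [hθode τ, hFode τ]; ring
      rwa [heq] at h
    have hzero : ∀ τ, θ τ - F τ = 0 := by
      refine aux_ode_zero _ _ hg1 hg2 ?_ ?_
      · simp [hθ0, hF0]
      · simp [hθ'0, hF'0]
    intro τ
    have := hzero τ
    have hθτ : θ τ = F τ := by linarith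
    exact hθτ
  · intro h
    have hθF : θ = F := funext h
    subst hθF
    refine ⟨fun τ => (hFd τ).differentiableAt, ?_, ?_, hF0, ?_⟩
    · rw [hderivF]; exact fun τ => (hF'd τ).differentiableAt
    · intro τ
      rw [hderivF, hderivF']
      exact hFode τ
    · rw [hderivF]; exact hF'0
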